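/- There exists an instance of balanced k-center (n = 6 collinear points, k = 3, L = U = 2) and a valid run of Gonzalez's algorithm producing S such that every 3-tuple of centers chosen from S³ induces a balanced clustering of radius at least (4 − δ)·r_opt, where δ > 0 can be made arbitrarily small. Concretely: points p_1,...,p_6 on a line with ‖p_1−p_2‖ = ‖p_3−p_4‖ = 2, ‖p_2−p_3‖ = ‖p_4−p_5‖ = 2−δ, p_5 = p_6; the optimal balanced clustering {p_1,p_2},{p_3,p_4},{p_5,p_6} has radius 1, and if Gonzalez starts at p_2 it selects S = {p_2, p_5, p_1}, for which every balanced clustering with centers from S has radius at least 4 − δ. -/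

import Mathlib

set_option maxRecDepth 100000

lemma filt13 (σ : Fin 6 → Fin 3) (m : Fin 3) (h : DecidablePred fun i => σ i = m) :
    (@Finset.filter _ _ h Finset.univ) = Finset.filter (fun i => σ i = m) Finset.univ := by
  congr

lemma auxD13 : ∀ σ : Fin 6 → Fin 3, ∀ c : Fin 3 → Fin 3,
    ¬((∀ m, (Finset.univ.filter fun i => σ i = m).card = 2) ∧
      c (σ 3) = 1 ∧ c (σ 4) = 1 ∧ c (σ 5) = 1 ∧
      c (σ 0) ≠ 1 ∧ c (σ 1) ≠ 1 ∧ c (σ 2) ≠ 1) := by decide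

lemma auxB13 : ∀ σ : Fin 6 → Fin 3, (∀ m, (Finset.univ.filter fun i => σ i = m).card = 2) →
    ∃ i j : Fin 6, i ≠ j ∧ σ i = σ j ∧
      ¬((i = 1 ∧ j = 2) ∨ (i = 2 ∧ j = 1) ∨
        (i ∈ ({3,4,5} : Finset (Fin 6)) ∧ j ∈ ({3,4,5} : Finset (Fin 6)))) := by decide

lemma hdist13 (δ : ℝ) (hδ0 : 0 < δ) (hδ1 : δ < 1) (i j : Fin 6) (hij : i ≠ j)
    (hb : ¬((i = 1 ∧ j = 2) ∨ (i = 2 ∧ j = 1) ∨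
        (i ∈ ({3,4,5} : Finset (Fin 6)) ∧ j ∈ ({3,4,5} : Finset (Fin 6))))) :
    2 ≤ dist ((![0, 2, 4 - δ, 6 - δ, 8 - 2 * δ, 8 - 2 * δ] : Fin 6 → ℝ) i)
      (![0, 2, 4 - δ, 6 - δ, 8 - 2 * δ, 8 - 2 * δ] j) := by
  fin_cases i <;> fin_cases j <;>
    first
    | exact absurd rfl hij
    | exact absurd (by decide) hb
    | (rw [Real.dist_eq, le_abs]
       first
       | (left; norm_num <;> linarith)
       | (right; norm_num <;> linarith))

attribute [local instance] Classical.propDecidable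

/-- the 6-point collinear instance showing the factor 4 is tight.
Points `0, 2, 4-δ, 6-δ, 8-2δ, 8-2δ` with `k = 3`, `L = U = 2`:
(a) there is a balanced clustering of radius `1`;
(b) every balanced clustering (with arbitrary real centers) has radius `≥ 1` (so `r_opt = 1`);
(c) `S = (p 1, p 4, p 0)` is a valid run of Gonzalez's algorithm starting at `p 1`;
(d) every balanced clustering whose centers are chosen from `S` has radius `≥ 4 - δ`. -/
theorem stmt13 (δ : ℝ) (hδ0 : 0 < δ) (hδ1 : δ < 1) :
    let p : Fin 6 → ℝ := ![0, 2, 4 - δ, 6 - δ, 8 - 2 * δ, 8 - 2 * δ]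
    let S : Fin 3 → ℝ := ![p 1, p 4, p 0]
    -- (a) radius 1 is feasible
    (∃ σ : Fin 6 → Fin 3, (∀ m, (Finset.univ.filter fun i => σ i = m).card = 2) ∧
        ∃ c : Fin 3 → ℝ, ∀ i, dist (p i) (c (σ i)) ≤ 1) ∧
    -- (b) no balanced clustering has radius < 1
    (∀ σ : Fin 6 → Fin 3, (∀ m, (Finset.univ.filter fun i => σ i = m).card = 2) →
        ∀ c : Fin 3 → ℝ, ∃ i, 1 ≤ dist (p i) (c (σ i))) ∧
    -- (c) `S` is a valid Gonzalez run starting at `p 1`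
    (∀ i, dist (p i) (p 1) ≤ dist (p 4) (p 1)) ∧
    (∀ i, min (dist (p i) (p 1)) (dist (p i) (p 4)) ≤
          min (dist (p 0) (p 1)) (dist (p 0) (p 4))) ∧
    -- (d) every balanced clustering with centers from `S³` has radius ≥ 4 - δ
    (∀ σ : Fin 6 → Fin 3, (∀ m, (Finset.univ.filter fun i => σ i = m).card = 2) →
        ∀ c : Fin 3 → Fin 3, ∃ i, 4 - δ ≤ dist (p i) (S (c (σ i)))) := by
  intro p S
  have hp : p = ![0, 2, 4 - δ, 6 - δ, 8 - 2 * δ, 8 - 2 * δ] := rfl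
  have hS : S = ![2, 8 - 2 * δ, 0] := rfl
  refine ⟨?_, ?_, ?_, ?_, ?_⟩
  · -- (a)
    refine ⟨![0, 0, 1, 1, 2, 2], ?_, ![1, 5 - δ, 8 - 2 * δ], ?_⟩
    · decide
    · intro i
      rw [hp]
      fin_cases i <;>
        · rw [Real.dist_eq, abs_le]
          constructor <;> norm_num [Matrix.cons_val_two, Matrix.cons_val_three, Matrix.cons_val_four] <;> linarith
  · -- (b)
    intro σ hσ c
    obtain ⟨i, j, hij, hs, hbig⟩ := auxB13 σ hσ
    by_contra hcon
    push_neg at hcon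
    have h2 : 2 ≤ dist (p i) (p j) := hdist13 δ hδ0 hδ1 i j hij hbig
    have ht := dist_triangle (p i) (c (σ i)) (p j)
    rw [hs] at ht
    rw [dist_comm (c (σ j)) (p j)] at ht
    have hi := hcon i
    have hj := hcon j
    rw [hs] at hi
    linarith
  · -- (c1)
    intro i
    have hr : dist (p 4) (p 1) = 6 - 2 * δ := by
      rw [show p 4 = 8 - 2 * δ from rfl, show p 1 = (2:ℝ) from rfl, Real.dist_eq,
        abs_of_nonneg (by linarith : (0:ℝ) ≤ 8 - 2 * δ - 2)]
      ring
    rw [hr, show p 1 = (2:ℝ) from rfl, hp]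
    fin_cases i <;>
      · rw [Real.dist_eq, abs_le]
        constructor <;> norm_num <;> linarith
  · -- (c2)
    intro i
    have hR : min (dist (p 0) (p 1)) (dist (p 0) (p 4)) = 2 := by
      rw [show p 0 = (0:ℝ) from rfl, show p 1 = (2:ℝ) from rfl,
        show p 4 = 8 - 2 * δ from rfl, Real.dist_eq, Real.dist_eq,
        abs_of_nonpos (by linarith : (0:ℝ) - 2 ≤ 0),
        abs_of_nonpos (by linarith : (0:ℝ) - (8 - 2 * δ) ≤ 0),
        min_eq_left (by linarith)]
      ring
    rw [hR, show p 1 = (2:ℝ) from rfl, show p 4 = 8 - 2 * δ from rfl, hp]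
    fin_cases i <;>
      first
      | (refine le_trans (min_le_left _ _) ?_
         rw [Real.dist_eq, abs_le]
         constructor <;> norm_num <;> linarith)
      | (refine le_trans (min_le_right _ _) ?_
         rw [Real.dist_eq, abs_le]
         constructor <;> norm_num <;> linarith)
  · -- (d)
    intro σ hσ c
    by_contra hcon
    push_neg at hcon
    rw [hS, hp] at hcon
    have h3' : ∀ x : Fin 3,
        dist ((![0, 2, 4 - δ, 6 - δ, 8 - 2 * δ, 8 - 2 * δ] : Fin 6 → ℝ) 3)
          ((![2, 8 - 2 * δ, 0] : Fin 3 → ℝ) x) < 4 - δ → x = 1 := by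
      intro x hx
      fin_cases x
      · exfalso; rw [Real.dist_eq, abs_sub_lt_iff] at hx
        have := hx.1; norm_num [Matrix.cons_val_two, Matrix.cons_val_three, Matrix.cons_val_four] at this <;> linarith
      · rfl
      · exfalso; rw [Real.dist_eq, abs_sub_lt_iff] at hx
        have := hx.1; norm_num [Matrix.cons_val_two, Matrix.cons_val_three, Matrix.cons_val_four] at this <;> linarith
    have h45 : ∀ y : Fin 6, y = 4 ∨ y = 5 → ∀ x : Fin 3,
        dist ((![0, 2, 4 - δ, 6 - δ, 8 - 2 * δ, 8 - 2 * δ] : Fin 6 → ℝ) y)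
          ((![2, 8 - 2 * δ, 0] : Fin 3 → ℝ) x) < 4 - δ → x = 1 := by
      have e5 : (![0, 2, 4 - δ, 6 - δ, 8 - 2 * δ, 8 - 2 * δ] : Fin 6 → ℝ) 5 = 8 - 2 * δ := rfl
      rintro y (rfl | rfl) x hx <;>
        (fin_cases x
         · exfalso; rw [Real.dist_eq, abs_sub_lt_iff] at hx
           have := hx.1; norm_num [e5, Matrix.cons_val_two, Matrix.cons_val_three, Matrix.cons_val_four] at this <;> linarith
         · rfl
         · exfalso; rw [Real.dist_eq, abs_sub_lt_iff] at hx
           have := hx.1; norm_num [e5, Matrix.cons_val_two, Matrix.cons_val_three, Matrix.cons_val_four] at this <;> linarith)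
    have h01 : ∀ y : Fin 6, y = 0 ∨ y = 1 ∨ y = 2 → ∀ x : Fin 3,
        dist ((![0, 2, 4 - δ, 6 - δ, 8 - 2 * δ, 8 - 2 * δ] : Fin 6 → ℝ) y)
          ((![2, 8 - 2 * δ, 0] : Fin 3 → ℝ) x) < 4 - δ → x ≠ 1 := by
      rintro y (rfl | rfl | rfl) x hx <;>
        (fin_cases x
         · decide
         · exfalso; rw [Real.dist_eq, abs_sub_lt_iff] at hx
           have := hx.2; norm_num [Matrix.cons_val_two, Matrix.cons_val_three, Matrix.cons_val_four] at this <;> linarith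
         · decide)
    exact auxD13 σ c ⟨hσ, h3' _ (hcon 3), h45 4 (Or.inl rfl) _ (hcon 4),
      h45 5 (Or.inr rfl) _ (hcon 5), h01 0 (Or.inl rfl) _ (hcon 0),
      h01 1 (Or.inr (Or.inl rfl)) _ (hcon 1), h01 2 (Or.inr (Or.inr rfl)) _ (hcon 2)⟩
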